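/- The rational Dunkl operators pairwise commute: D_b ∘ D_c = D_c ∘ D_b as operators on ℂ[V], for all b, c ∈ V. -/

import Mathlib

noncomputable section

open scoped RealInnerProductSpace BigOperators

namespace Stmt17

/-- Euclidean space `V = ℝ^n`. -/
abbrev V (n : ℕ) := EuclideanSpace ℝ (Fin n)

/-- Polynomial functions on `V`, in coordinates. -/
abbrev Poly (n : ℕ) := MvPolynomial (Fin n) ℂ

/-- The linear polynomial `x_b = (b, ·)`. -/
def xpoly (n : ℕ) (b : V n) : Poly n :=
  ∑ i : Fin n, MvPolynomial.C (b i : ℂ) * MvPolynomial.X i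

/-- The action of the orthogonal reflection `s_α` on polynomial functions,
`(s_α f)(v) = f(s_α v)`. -/
def sAct (n : ℕ) (α : V n) : Poly n →ₐ[ℂ] Poly n :=
  MvPolynomial.aeval fun i : Fin n =>
    MvPolynomial.X i - MvPolynomial.C ((2 * (α i) / ⟪α, α⟫ : ℝ) : ℂ) * xpoly n α

/-- The directional derivative `∂_b` on polynomials. -/
def der (n : ℕ) (b : V n) (f : Poly n) : Poly n :=
  ∑ i : Fin n, MvPolynomial.C (b i : ℂ) * MvPolynomial.pderiv i f

/-- `IsDunkl Rplus k b Dop` says that `Dop` is the rational Dunkl operator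
`D_b f = ∂_b f + Σ_{α ∈ R_+} k_α (b,α)·(f − s_α f)/x_α`. -/
def IsDunkl (n : ℕ) (Rplus : Finset (V n)) (k : V n → ℂ) (b : V n)
    (Dop : Poly n → Poly n) : Prop :=
  ∀ f : Poly n, ∃ g : V n → Poly n,
    (∀ α ∈ Rplus, xpoly n α * g α = f - sAct n α f) ∧
    Dop f = der n b f + ∑ α ∈ Rplus, (k α * (⟪b, α⟫ : ℂ)) • g α

open MvPolynomial

variable {n : ℕ}

/-- the reflection in α -/
def sig (α a : V n) : V n := a - (2 * ⟪a, α⟫ / ⟪α, α⟫) • α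

lemma inner_sig_right (α v w : V n) : ⟪v, sig α w⟫ = ⟪v, w⟫ - (2 * ⟪w, α⟫ / ⟪α, α⟫) * ⟪v, α⟫ := by
  rw [sig, inner_sub_right, real_inner_smul_right]

lemma inner_sig_left (α v w : V n) : ⟪sig α v, w⟫ = ⟪v, w⟫ - (2 * ⟪v, α⟫ / ⟪α, α⟫) * ⟪α, w⟫ := by
  rw [sig, inner_sub_left, real_inner_smul_left]

lemma inner_sig_self (α : V n) (hα : ⟪α, α⟫ ≠ 0) (v : V n) : ⟪sig α v, α⟫ = -⟪v, α⟫ := by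
  rw [inner_sig_left, div_mul_eq_mul_div, mul_div_assoc, div_self hα, mul_one]; ring

lemma inner_sig_sig (α : V n) (hα : ⟪α, α⟫ ≠ 0) (v w : V n) :
    ⟪sig α v, sig α w⟫ = ⟪v, w⟫ := by
  rw [inner_sig_right, inner_sig_left, inner_sig_self α hα, real_inner_comm α w]
  ring

lemma sig_invol (α : V n) (hα : ⟪α, α⟫ ≠ 0) (v : V n) : sig α (sig α v) = v := by
  rw [sig, inner_sig_self α hα]
  rw [sig]
  rw [show (2 * -⟪v, α⟫ / ⟪α, α⟫) = -(2 * ⟪v, α⟫ / ⟪α, α⟫) by ring, neg_smul]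
  abel

lemma sig_conj (α β : V n) (hα : ⟪α, α⟫ ≠ 0) (v : V n) :
    sig α (sig β v) = sig (sig α β) (sig α v) := by
  have h1 : ⟪sig α β, sig α β⟫ = ⟪β, β⟫ := inner_sig_sig α hα β β
  have h2 : ⟪sig α v, sig α β⟫ = ⟪v, β⟫ := inner_sig_sig α hα v β
  rw [show sig (sig α β) (sig α v) = sig α v - (2 * ⟪sig α v, sig α β⟫ / ⟪sig α β, sig α β⟫) • (sig α β) from rfl, h1, h2]
  rw [show sig α (sig β v) = sig β v - (2 * ⟪sig β v, α⟫ / ⟪α, α⟫) • α from rfl]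
  rw [inner_sig_left β v α]
  simp only [sig]
  match_scalars <;> ring

lemma sig_self (α : V n) (hα : ⟪α, α⟫ ≠ 0) : sig α α = -α := by
  rw [sig, mul_div_assoc, div_self hα, mul_one, two_smul]; abel

lemma sig_smul (α : V n) (r : ℝ) (v : V n) : sig α (r • v) = r • sig α v := by
  simp only [sig, real_inner_smul_left, smul_sub]
  match_scalars <;> ring

lemma sig_sub (α : V n) (v w : V n) : sig α (v - w) = sig α v - sig α w := by
  simp only [sig, inner_sub_left]
  match_scalars <;> ring

lemma sig_ne_zero (α : V n) (hα : ⟪α, α⟫ ≠ 0) {v : V n} (hv : v ≠ 0) : sig α v ≠ 0 := by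
  intro h
  apply hv
  have := congrArg (sig α) h
  rw [sig_invol α hα] at this
  rw [this]
  simp [sig]

lemma sig_apply (α a : V n) (i : Fin n) :
    sig α a i = a i - (2 * ⟪a, α⟫ / ⟪α, α⟫) * α i := by
  simp [sig]

lemma inner_apply' (a b : V n) : ⟪a, b⟫ = ∑ i, a i * b i := by
  simp [PiLp.inner_apply]
  exact Finset.sum_congr rfl fun i _ => mul_comm _ _


lemma xpoly_add (a b : V n) : xpoly n (a + b) = xpoly n a + xpoly n b := by
  rw [xpoly, xpoly, xpoly, ← Finset.sum_add_distrib]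
  refine Finset.sum_congr rfl fun i _ => ?_
  have : (a + b) i = a i + b i := rfl
  rw [this]
  push_cast [map_add]
  ring

lemma xpoly_smul (r : ℝ) (a : V n) : xpoly n (r • a) = C (r : ℂ) * xpoly n a := by
  rw [xpoly, xpoly, Finset.mul_sum]
  refine Finset.sum_congr rfl fun i _ => ?_
  have : (r • a) i = r * a i := rfl
  rw [this]
  push_cast [map_mul]
  ring

lemma xpoly_neg (a : V n) : xpoly n (-a) = -xpoly n a := by
  have : (-a) = (-1 : ℝ) • a := by module
  rw [this, xpoly_smul]
  push_cast [map_neg, map_one]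
  ring

lemma xpoly_sub (a b : V n) : xpoly n (a - b) = xpoly n a - xpoly n b := by
  have : a - b = a + (-b) := by abel
  rw [this, xpoly_add, xpoly_neg]; ring

lemma xpoly_sig (α a : V n) : xpoly n (sig α a) = xpoly n a - C ((2 * ⟪a, α⟫ / ⟪α, α⟫ : ℝ) : ℂ) * xpoly n α := by
  rw [sig, xpoly_sub, xpoly_smul]

lemma xpoly_single (i : Fin n) : xpoly n (EuclideanSpace.single i (1:ℝ)) = X i := by
  rw [xpoly]
  rw [Finset.sum_eq_single i]
  · simp
  · intro j _ hj
    simp [EuclideanSpace.single_apply, hj]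
  · simp

lemma xpoly_ne_zero {a : V n} (ha : a ≠ 0) : xpoly n a ≠ 0 := by
  intro h
  have h2 := congrArg (eval fun j => (a j : ℂ)) h
  simp only [xpoly, map_sum, map_mul, eval_C, eval_X, map_zero] at h2
  have h3 : ((⟪a, a⟫ : ℝ) : ℂ) = 0 := by
    rw [inner_apply']
    push_cast
    exact h2
  rw [Complex.ofReal_eq_zero] at h3
  exact inner_self_ne_zero.mpr ha h3

lemma sAct_X (α : V n) (i : Fin n) :
    sAct n α (X i) = X i - C ((2 * α i / ⟪α, α⟫ : ℝ) : ℂ) * xpoly n α := by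
  rw [sAct, aeval_X]

lemma sAct_C (α : V n) (z : ℂ) : sAct n α (C z) = C z := by
  rw [sAct, aeval_C]; rfl

lemma sAct_xpoly (α a : V n) : sAct n α (xpoly n a) = xpoly n (sig α a) := by
  rw [xpoly_sig, xpoly, map_sum]
  simp only [map_mul, sAct_C, sAct_X]
  have hsum : (∑ i, C ((a i : ℝ) : ℂ) * (X i - C ((2 * α i / ⟪α, α⟫ : ℝ):ℂ) * xpoly n α))
      = (∑ i, (C ((a i : ℝ):ℂ) * X i - C ((a i : ℝ):ℂ) * C ((2 * α i / ⟪α, α⟫ : ℝ):ℂ) * xpoly n α)) :=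
    Finset.sum_congr rfl fun i _ => by ring
  rw [hsum]
  rw [Finset.sum_sub_distrib, ← Finset.sum_mul, ← xpoly]
  congr 1
  simp only [← map_mul]
  have hs : ∑ x : Fin n, ((a x : ℂ) * ((2 * α x / ⟪α, α⟫ : ℝ) : ℂ)) = ((2 * ⟪a, α⟫ / ⟪α, α⟫ : ℝ) : ℂ) := by
    rw [inner_apply' a α]
    push_cast
    rw [Finset.mul_sum, Finset.sum_div]
    exact Finset.sum_congr rfl fun i _ => by ring
  rw [← map_sum C (fun x : Fin n => (a x : ℂ) * ((2 * α x / ⟪α, α⟫ : ℝ) : ℂ)) Finset.univ, hs]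

lemma sAct_neg (α : V n) : sAct n (-α) = sAct n α := by
  refine MvPolynomial.algHom_ext fun i => ?_
  rw [show sAct n (-α) (X i) = X i - C ((2 * (-α) i / ⟪-α, -α⟫ : ℝ) : ℂ) * xpoly n (-α) from aeval_X _ _, sAct_X]
  rw [xpoly_neg, inner_neg_neg]
  have h1 : ((-α) i : ℝ) = -(α i) := rfl
  have h2 : ((2 * (-α i) / ⟪α, α⟫ : ℝ) : ℂ) = -((2 * α i / ⟪α, α⟫ : ℝ) : ℂ) := by
    push_cast; ring
  rw [h1, h2, map_neg]
  ring

lemma sAct_conj (α β : V n) (hα : ⟪α, α⟫ ≠ 0) (f : Poly n) :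
    sAct n (sig α β) (sAct n α f) = sAct n α (sAct n β f) := by
  have key : (sAct n (sig α β)).comp (sAct n α) = (sAct n α).comp (sAct n β) := by
    refine MvPolynomial.algHom_ext fun i => ?_
    simp only [AlgHom.comp_apply, sAct_X, map_sub, map_mul, sAct_C, sAct_xpoly]
    rw [show sig (sig α β) α = α - (2 * ⟪α, sig α β⟫ / ⟪sig α β, sig α β⟫) • (sig α β) from rfl]
    rw [show ⟪α, sig α β⟫ = -⟪β, α⟫ from by rw [real_inner_comm, inner_sig_self α hα]]
    rw [inner_sig_sig α hα β β]
    rw [xpoly_sub, xpoly_smul]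
    have hc : (C ((2 * sig α β i / ⟪β, β⟫ : ℝ) : ℂ) : Poly n)
        = C ((2 * β i / ⟪β, β⟫ : ℝ) : ℂ)
          + C ((2 * α i / ⟪α, α⟫ : ℝ) : ℂ) * C ((2 * -⟪β, α⟫ / ⟪β, β⟫ : ℝ) : ℂ) := by
      rw [← map_mul, ← map_add]
      congr 1
      rw [show (2 * sig α β i / ⟪β, β⟫ : ℝ)
          = (2 * (β i - (2 * ⟪β, α⟫ / ⟪α, α⟫) * α i) / ⟪β, β⟫ : ℝ) from by rw [sig_apply]]
      push_cast
      ring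
    rw [hc]
    ring
  exact DFunLike.congr_fun key f

lemma der_add (b : V n) (f g : Poly n) : der n b (f + g) = der n b f + der n b g := by
  simp [der, Finset.sum_add_distrib, mul_add]

lemma der_sub (b : V n) (f g : Poly n) : der n b (f - g) = der n b f - der n b g := by
  simp [der, Finset.sum_sub_distrib, mul_sub]

lemma der_smul (b : V n) (z : ℂ) (f : Poly n) : der n b (z • f) = z • der n b f := by
  simp [der, Finset.smul_sum, mul_smul_comm]

lemma der_C (b : V n) (z : ℂ) : der n b (C z) = 0 := by
  simp [der, pderiv_C]

lemma der_C_mul (b : V n) (z : ℂ) (f : Poly n) : der n b (C z * f) = C z * der n b f := by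
  simp only [der, pderiv_mul, pderiv_C, zero_mul, zero_add, Finset.mul_sum]
  exact Finset.sum_congr rfl fun i _ => by ring

lemma der_mul (b : V n) (f g : Poly n) :
    der n b (f * g) = der n b f * g + f * der n b g := by
  simp only [der, pderiv_mul, mul_add, Finset.sum_add_distrib, Finset.sum_mul, Finset.mul_sum]
  congr 1
  · exact Finset.sum_congr rfl fun i _ => by ring
  · exact Finset.sum_congr rfl fun i _ => by ring

lemma der_X (b : V n) (i : Fin n) : der n b (X i) = C ((b i : ℝ) : ℂ) := by
  rw [der, Finset.sum_eq_single i]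
  · simp
  · intro j _ hj
    rw [pderiv_X]
    simp [Pi.single_apply, hj]
  · simp

lemma der_b_add (b c : V n) (f : Poly n) : der n (b + c) f = der n b f + der n c f := by
  rw [der, der, der, ← Finset.sum_add_distrib]
  refine Finset.sum_congr rfl fun i _ => ?_
  have : (b + c) i = b i + c i := rfl
  rw [this]
  push_cast [map_add]
  ring

lemma der_b_smul (r : ℝ) (b : V n) (f : Poly n) : der n (r • b) f = C (r : ℂ) * der n b f := by
  rw [der, der, Finset.mul_sum]
  refine Finset.sum_congr rfl fun i _ => ?_
  have : (r • b) i = r * b i := rfl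
  rw [this]
  push_cast [map_mul]
  ring

lemma der_b_sub (b c : V n) (f : Poly n) : der n (b - c) f = der n b f - der n c f := by
  rw [der, der, der, ← Finset.sum_sub_distrib]
  refine Finset.sum_congr rfl fun i _ => ?_
  have : (b - c) i = b i - c i := rfl
  rw [this]
  push_cast [map_sub]
  ring

lemma der_sum {ι : Type*} (b : V n) (s : Finset ι) (g : ι → Poly n) :
    der n b (∑ i ∈ s, g i) = ∑ i ∈ s, der n b (g i) := by
  simp only [der, map_sum, Finset.mul_sum]
  rw [Finset.sum_comm]

lemma der_xpoly (b a : V n) : der n b (xpoly n a) = C ((⟪b, a⟫ : ℝ) : ℂ) := by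
  rw [xpoly, der_sum]
  have : ∀ i : Fin n, der n b (C ((a i : ℝ):ℂ) * X i) = C ((a i : ℝ):ℂ) * C ((b i : ℝ):ℂ) := by
    intro i
    rw [der_C_mul, der_X]
  rw [Finset.sum_congr rfl fun i _ => this i]
  rw [inner_apply' b a]
  simp only [← map_mul]
  rw [← map_sum C (fun i : Fin n => ((a i : ℝ):ℂ) * ((b i : ℝ):ℂ)) Finset.univ]
  refine congrArg (fun z : ℂ => (C z : Poly n)) ?_
  push_cast
  exact Finset.sum_congr rfl fun i _ => by ring

lemma der_sAct (α b : V n) (f : Poly n) :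
    der n b (sAct n α f) = sAct n α (der n (sig α b) f) := by
  induction f using MvPolynomial.induction_on with
  | C z => rw [sAct_C, der_C, der_C, map_zero]
  | add f g hf hg => rw [map_add, der_add, hf, hg, der_add, map_add]
  | mul_X f i ih =>
    rw [map_mul, sAct_X, der_mul, ih, der_mul, map_add, map_mul, map_mul, sAct_X]
    congr 1
    rw [der_sub, der_X, der_C_mul, der_xpoly, der_X, sAct_C]
    congr 1
    rw [← map_mul (C : ℂ →+* Poly n), ← map_sub (C : ℂ →+* Poly n)]
    refine congrArg (fun z : ℂ => (C z : Poly n)) ?_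
    rw [sig_apply]
    push_cast
    ring

lemma exists_q (α : V n) (f : Poly n) : ∃ g : Poly n, xpoly n α * g = f - sAct n α f := by
  induction f using MvPolynomial.induction_on with
  | C z => exact ⟨0, by rw [sAct_C]; ring⟩
  | add f g hf hg =>
    obtain ⟨u, hu⟩ := hf
    obtain ⟨v, hv⟩ := hg
    exact ⟨u + v, by rw [map_add, mul_add, hu, hv]; ring⟩
  | mul_X f i ih =>
    obtain ⟨u, hu⟩ := ih
    refine ⟨u * X i + C ((2 * α i / ⟪α, α⟫ : ℝ) : ℂ) * sAct n α f, ?_⟩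
    rw [map_mul, sAct_X, mul_add, ← mul_assoc, hu]
    ring

def qp (α : V n) (f : Poly n) : Poly n := (exists_q α f).choose

lemma xq (α : V n) (f : Poly n) : xpoly n α * qp α f = f - sAct n α f :=
  (exists_q α f).choose_spec

lemma q_eq {α : V n} (hα : α ≠ 0) {f g : Poly n} (hg : xpoly n α * g = f - sAct n α f) :
    g = qp α f :=
  mul_left_cancel₀ (xpoly_ne_zero hα) (by rw [hg, xq])

lemma qp_C {α : V n} (hα : α ≠ 0) (z : ℂ) : qp α (C z) = 0 :=
  (q_eq hα (f := C z) (by rw [sAct_C]; ring)).symm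

lemma qp_zero {α : V n} (hα : α ≠ 0) : qp α 0 = 0 :=
  (q_eq hα (f := 0) (by rw [map_zero]; ring)).symm

lemma qp_add {α : V n} (hα : α ≠ 0) (f g : Poly n) :
    qp α (f + g) = qp α f + qp α g := by
  refine (q_eq hα ?_).symm
  rw [map_add, mul_add, xq, xq]
  ring

lemma qp_smul {α : V n} (hα : α ≠ 0) (z : ℂ) (f : Poly n) :
    qp α (z • f) = z • qp α f := by
  refine (q_eq hα ?_).symm
  rw [map_smul, mul_smul_comm, xq, smul_sub]

lemma qp_sum {α : V n} (hα : α ≠ 0) {ι : Type*} (s : Finset ι) (g : ι → Poly n) :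
    qp α (∑ i ∈ s, g i) = ∑ i ∈ s, qp α (g i) := by
  refine (q_eq hα ?_).symm
  rw [map_sum, Finset.mul_sum, ← Finset.sum_sub_distrib]
  exact Finset.sum_congr rfl fun i _ => xq α (g i)

lemma qp_neg_root {α : V n} (hα : α ≠ 0) (f : Poly n) : qp (-α) f = -qp α f := by
  have h := xq (-α) f
  rw [sAct_neg, xpoly_neg] at h
  have h2 : xpoly n α * (-qp (-α) f) = f - sAct n α f := by rw [← h]; ring
  have := q_eq hα h2
  rw [← this]; ring

lemma qp_xa_mul {α : V n} (hα : α ≠ 0) (a : V n) (f : Poly n) :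
    qp α (xpoly n a * f)
      = xpoly n a * qp α f + C ((2 * ⟪a, α⟫ / ⟪α, α⟫ : ℝ) : ℂ) * sAct n α f := by
  refine (q_eq hα ?_).symm
  rw [map_mul, sAct_xpoly, xpoly_sig, mul_add]
  rw [show xpoly n α * (xpoly n a * qp α f) = xpoly n a * (xpoly n α * qp α f) from by ring, xq]
  ring

/-- The canonical Dunkl operator. -/
def DD (Rplus : Finset (V n)) (k : V n → ℂ) (b : V n) (f : Poly n) : Poly n :=
  der n b f + ∑ α ∈ Rplus, (k α * (⟪b, α⟫ : ℂ)) • qp α f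

section DDprops
variable {Rplus : Finset (V n)} (hα0 : ∀ α ∈ Rplus, α ≠ (0 : V n)) (k : V n → ℂ) (b : V n)
include hα0

lemma DD_add (f g : Poly n) :
    DD Rplus k b (f + g) = DD Rplus k b f + DD Rplus k b g := by
  rw [DD, DD, DD, der_add]
  rw [show ∑ α ∈ Rplus, (k α * (⟪b, α⟫ : ℂ)) • qp α (f + g)
      = ∑ α ∈ Rplus, ((k α * (⟪b, α⟫ : ℂ)) • qp α f + (k α * (⟪b, α⟫ : ℂ)) • qp α g) from
    Finset.sum_congr rfl fun α hα => by rw [qp_add (hα0 α hα), smul_add]]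
  rw [Finset.sum_add_distrib]
  ring

lemma DD_smul (z : ℂ) (f : Poly n) :
    DD Rplus k b (z • f) = z • DD Rplus k b f := by
  rw [DD, DD, der_smul, smul_add, Finset.smul_sum]
  congr 1
  refine Finset.sum_congr rfl fun α hα => ?_
  rw [qp_smul (hα0 α hα), smul_comm]

lemma DD_C (z : ℂ) : DD Rplus k b (C z) = 0 := by
  rw [DD, der_C]
  rw [show ∑ α ∈ Rplus, (k α * (⟪b, α⟫ : ℂ)) • qp α (C z) = 0 from
    Finset.sum_eq_zero fun α hα => by rw [qp_C (hα0 α hα), smul_zero]]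
  ring

lemma DD_zero : DD Rplus k b 0 = 0 := by
  have := DD_C hα0 k b 0
  rwa [map_zero] at this

lemma DD_sum {ι : Type*} (s : Finset ι) (g : ι → Poly n) :
    DD Rplus k b (∑ i ∈ s, g i) = ∑ i ∈ s, DD Rplus k b (g i) := by
  classical
  induction s using Finset.induction_on with
  | empty => simpa using DD_zero hα0 k b
  | insert _ _ h ih =>
    rw [Finset.sum_insert h, Finset.sum_insert h, DD_add hα0, ih]

lemma DD_L1 (a : V n) (f : Poly n) :
    DD Rplus k b (xpoly n a * f)
      = xpoly n a * DD Rplus k b f + ((⟪b, a⟫ : ℝ) : ℂ) • f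
        + ∑ α ∈ Rplus, (k α * (⟪b, α⟫ : ℂ) * ((2 * ⟪a, α⟫ / ⟪α, α⟫ : ℝ) : ℂ)) • sAct n α f := by
  rw [DD, DD, der_mul, der_xpoly]
  rw [show ∑ α ∈ Rplus, (k α * (⟪b, α⟫ : ℂ)) • qp α (xpoly n a * f)
      = ∑ α ∈ Rplus, (xpoly n a * ((k α * (⟪b, α⟫ : ℂ)) • qp α f)
          + (k α * (⟪b, α⟫ : ℂ) * ((2 * ⟪a, α⟫ / ⟪α, α⟫ : ℝ) : ℂ)) • sAct n α f) from
    Finset.sum_congr rfl fun α hα => by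
      rw [qp_xa_mul (hα0 α hα), smul_add, mul_smul_comm]
      congr 1
      rw [smul_eq_C_mul, smul_eq_C_mul]
      simp only [map_mul]
      ring]
  rw [Finset.sum_add_distrib, ← Finset.mul_sum, smul_eq_C_mul]
  ring
end DDprops

lemma DD_b_sub (Rplus : Finset (V n)) (k : V n → ℂ) (b c : V n) (f : Poly n) :
    DD Rplus k (b - c) f = DD Rplus k b f - DD Rplus k c f := by
  rw [DD, DD, DD, der_b_sub]
  rw [show ∑ α ∈ Rplus, (k α * (⟪b - c, α⟫ : ℂ)) • qp α f
      = ∑ α ∈ Rplus, ((k α * (⟪b, α⟫ : ℂ)) • qp α f - (k α * (⟪c, α⟫ : ℂ)) • qp α f) from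
    Finset.sum_congr rfl fun α hα => by
      rw [inner_sub_left, ← sub_smul]
      congr 1
      push_cast
      ring]
  rw [Finset.sum_sub_distrib]
  ring

lemma DD_b_smul (Rplus : Finset (V n)) (k : V n → ℂ) (r : ℝ) (b : V n) (f : Poly n) :
    DD Rplus k (r • b) f = ((r : ℝ) : ℂ) • DD Rplus k b f := by
  rw [DD, DD, der_b_smul, smul_add, Finset.smul_sum, smul_eq_C_mul]
  congr 1
  refine Finset.sum_congr rfl fun α hα => ?_
  rw [real_inner_smul_left, smul_smul]
  congr 1
  push_cast
  ring

lemma sig_neg_vec (α v : V n) : sig α (-v) = -sig α v := by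
  rw [show (-v : V n) = (-1 : ℝ) • v from by module, sig_smul]
  module

lemma sAct_qp_sig (α : V n) (hs : ⟪α, α⟫ ≠ 0) {β : V n} (hβ : β ≠ 0) (f : Poly n) :
    sAct n α (qp β f) = qp (sig α β) (sAct n α f) := by
  refine q_eq (sig_ne_zero α hs hβ) ?_
  rw [← sAct_xpoly, ← map_mul, xq, map_sub, sAct_conj α β hs]

theorem sAct_DD
    (R Rplus : Finset (V n))
    (hne : ∀ α ∈ R, α ≠ (0 : V n))
    (hrefl : ∀ α ∈ R, ∀ β ∈ R, β - (2 * ⟪β, α⟫ / ⟪α, α⟫) • α ∈ R)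
    (hsub : Rplus ⊆ R)
    (hpos : ∀ α ∈ R, α ∈ Rplus ∨ -α ∈ Rplus)
    (hdisj : ∀ α ∈ Rplus, -α ∉ Rplus)
    (k : V n → ℂ)
    (hk : ∀ α ∈ R, ∀ β ∈ R, k (β - (2 * ⟪β, α⟫ / ⟪α, α⟫) • α) = k β)
    {α : V n} (hαR : α ∈ R) (d : V n) (f : Poly n) :
    sAct n α (DD Rplus k d f) = DD Rplus k (sig α d) (sAct n α f) := by
  classical
  have hα : α ≠ 0 := hne α hαR
  have hs : ⟪α, α⟫ ≠ 0 := inner_self_ne_zero.mpr hα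
  have hsigmem : ∀ β ∈ R, sig α β ∈ R := fun β hβ => hrefl α hαR β hβ
  have hksig : ∀ β ∈ R, k (sig α β) = k β := fun β hβ => hk α hαR β hβ
  have hkneg : ∀ δ ∈ R, k (-δ) = k δ := by
    intro δ hδ
    have hδs : ⟪δ, δ⟫ ≠ 0 := inner_self_ne_zero.mpr (hne δ hδ)
    have h2 := hk δ hδ δ hδ
    rwa [show δ - (2 * ⟪δ, δ⟫ / ⟪δ, δ⟫) • δ = -δ from by
      rw [mul_div_assoc, div_self hδs, mul_one, two_smul]; abel] at h2
  set τ : V n → V n := fun β => if sig α β ∈ Rplus then sig α β else -(sig α β) with hτ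
  have hτmem : ∀ β ∈ Rplus, τ β ∈ Rplus := by
    intro β hβ
    by_cases hmem : sig α β ∈ Rplus
    · rw [hτ]; simp only [if_pos hmem]; exact hmem
    · rw [hτ]; simp only [if_neg hmem]
      rcases hpos (sig α β) (hsigmem β (hsub hβ)) with h | h
      · exact absurd h hmem
      · exact h
  have hττ : ∀ β ∈ Rplus, τ (τ β) = β := by
    intro β hβ
    by_cases hmem : sig α β ∈ Rplus
    · rw [hτ]; simp only [if_pos hmem]
      rw [sig_invol α hs β, if_pos hβ]
    · rw [hτ]; simp only [if_neg hmem]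
      rw [sig_neg_vec, sig_invol α hs β, if_neg (by simpa using hdisj β hβ), neg_neg]
  have termEq : ∀ β ∈ Rplus,
      (k β * (⟪d, β⟫ : ℂ)) • sAct n α (qp β f)
        = (k (τ β) * (⟪sig α d, τ β⟫ : ℂ)) • qp (τ β) (sAct n α f) := by
    intro β hβ
    have hβ0 : β ≠ 0 := hne β (hsub hβ)
    have hq := sAct_qp_sig α hs hβ0 f
    by_cases hmem : sig α β ∈ Rplus
    · rw [hτ]; simp only [if_pos hmem]
      rw [hksig β (hsub hβ), inner_sig_sig α hs d β, ← hq]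
    · rw [hτ]; simp only [if_neg hmem]
      rw [hkneg (sig α β) (hsigmem β (hsub hβ)), hksig β (hsub hβ)]
      rw [inner_neg_right, inner_sig_sig α hs d β]
      rw [qp_neg_root (sig_ne_zero α hs hβ0), ← hq]
      push_cast
      rw [smul_neg, ← neg_smul]
      congr 1
      ring
  rw [DD, DD, map_add, der_sAct, sig_invol α hs d, map_sum]
  congr 1
  rw [show ∑ β ∈ Rplus, sAct n α ((k β * (⟪d, β⟫ : ℂ)) • qp β f)
      = ∑ β ∈ Rplus, (k β * (⟪d, β⟫ : ℂ)) • sAct n α (qp β f) from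
    Finset.sum_congr rfl fun β _ => map_smul _ _ _]
  refine Finset.sum_nbij' τ τ hτmem hτmem hττ hττ ?_
  intro β hβ
  exact termEq β hβ

theorem comm_key
    (R Rplus : Finset (V n))
    (hne : ∀ α ∈ R, α ≠ (0 : V n))
    (hrefl : ∀ α ∈ R, ∀ β ∈ R, β - (2 * ⟪β, α⟫ / ⟪α, α⟫) • α ∈ R)
    (hsub : Rplus ⊆ R)
    (hpos : ∀ α ∈ R, α ∈ Rplus ∨ -α ∈ Rplus)
    (hdisj : ∀ α ∈ Rplus, -α ∉ Rplus)
    (k : V n → ℂ)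
    (hk : ∀ α ∈ R, ∀ β ∈ R, k (β - (2 * ⟪β, α⟫ / ⟪α, α⟫) • α) = k β)
    (b c a : V n) (f : Poly n) :
    DD Rplus k b (DD Rplus k c (xpoly n a * f)) - DD Rplus k c (DD Rplus k b (xpoly n a * f))
      = xpoly n a * (DD Rplus k b (DD Rplus k c f) - DD Rplus k c (DD Rplus k b f)) := by
  have hα0 : ∀ α ∈ Rplus, α ≠ (0 : V n) := fun α h => hne α (hsub h)
  have expand : ∀ u v : V n,
      DD Rplus k u (DD Rplus k v (xpoly n a * f))
        = xpoly n a * DD Rplus k u (DD Rplus k v f)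
          + ((⟪u, a⟫ : ℝ) : ℂ) • DD Rplus k v f
          + (∑ α ∈ Rplus, (k α * (⟪u, α⟫ : ℂ) * ((2 * ⟪a, α⟫ / ⟪α, α⟫ : ℝ) : ℂ)) • sAct n α (DD Rplus k v f))
          + ((⟪v, a⟫ : ℝ) : ℂ) • DD Rplus k u f
          + (∑ α ∈ Rplus, (k α * (⟪v, α⟫ : ℂ) * ((2 * ⟪a, α⟫ / ⟪α, α⟫ : ℝ) : ℂ)) • sAct n α (DD Rplus k (sig α u) f)) := by
    intro u v
    rw [DD_L1 hα0 k v a f, DD_add hα0 k u, DD_add hα0 k u, DD_L1 hα0 k u a (DD Rplus k v f), DD_smul hα0 k u, DD_sum hα0 k u]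
    have hterm : ∀ α ∈ Rplus,
        DD Rplus k u ((k α * (⟪v, α⟫ : ℂ) * ((2 * ⟪a, α⟫ / ⟪α, α⟫ : ℝ) : ℂ)) • sAct n α f)
          = (k α * (⟪v, α⟫ : ℂ) * ((2 * ⟪a, α⟫ / ⟪α, α⟫ : ℝ) : ℂ)) • sAct n α (DD Rplus k (sig α u) f) := by
      intro α hα
      rw [DD_smul hα0 k u]
      congr 1
      rw [sAct_DD R Rplus hne hrefl hsub hpos hdisj k hk (hsub hα) (sig α u) f,
        sig_invol α (inner_self_ne_zero.mpr (hne α (hsub hα))) u]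
    rw [Finset.sum_congr rfl hterm]
  rw [expand b c, expand c b]
  have sums :
      (∑ α ∈ Rplus, (k α * (⟪b, α⟫ : ℂ) * ((2 * ⟪a, α⟫ / ⟪α, α⟫ : ℝ) : ℂ)) • sAct n α (DD Rplus k c f))
      + (∑ α ∈ Rplus, (k α * (⟪c, α⟫ : ℂ) * ((2 * ⟪a, α⟫ / ⟪α, α⟫ : ℝ) : ℂ)) • sAct n α (DD Rplus k (sig α b) f))
      - (∑ α ∈ Rplus, (k α * (⟪c, α⟫ : ℂ) * ((2 * ⟪a, α⟫ / ⟪α, α⟫ : ℝ) : ℂ)) • sAct n α (DD Rplus k b f))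
      - (∑ α ∈ Rplus, (k α * (⟪b, α⟫ : ℂ) * ((2 * ⟪a, α⟫ / ⟪α, α⟫ : ℝ) : ℂ)) • sAct n α (DD Rplus k (sig α c) f))
      = 0 := by
    rw [← Finset.sum_add_distrib, ← Finset.sum_sub_distrib, ← Finset.sum_sub_distrib]
    refine Finset.sum_eq_zero fun α hα => ?_
    have hs : ⟪α, α⟫ ≠ 0 := inner_self_ne_zero.mpr (hne α (hsub hα))
    have hcc : DD Rplus k c f - DD Rplus k (sig α c) f
        = ((2 * ⟪c, α⟫ / ⟪α, α⟫ : ℝ) : ℂ) • DD Rplus k α f := by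
      rw [← DD_b_sub, show c - sig α c = (2 * ⟪c, α⟫ / ⟪α, α⟫) • α from by
        rw [sig]; abel, DD_b_smul]
    have hbb : DD Rplus k b f - DD Rplus k (sig α b) f
        = ((2 * ⟪b, α⟫ / ⟪α, α⟫ : ℝ) : ℂ) • DD Rplus k α f := by
      rw [← DD_b_sub, show b - sig α b = (2 * ⟪b, α⟫ / ⟪α, α⟫) • α from by
        rw [sig]; abel, DD_b_smul]
    have step : (k α * (⟪b, α⟫ : ℂ) * ((2 * ⟪a, α⟫ / ⟪α, α⟫ : ℝ) : ℂ)) • sAct n α (DD Rplus k c f)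
        + (k α * (⟪c, α⟫ : ℂ) * ((2 * ⟪a, α⟫ / ⟪α, α⟫ : ℝ) : ℂ)) • sAct n α (DD Rplus k (sig α b) f)
        - (k α * (⟪c, α⟫ : ℂ) * ((2 * ⟪a, α⟫ / ⟪α, α⟫ : ℝ) : ℂ)) • sAct n α (DD Rplus k b f)
        - (k α * (⟪b, α⟫ : ℂ) * ((2 * ⟪a, α⟫ / ⟪α, α⟫ : ℝ) : ℂ)) • sAct n α (DD Rplus k (sig α c) f)
        = sAct n α ((k α * (⟪b, α⟫ : ℂ) * ((2 * ⟪a, α⟫ / ⟪α, α⟫ : ℝ) : ℂ)) • (DD Rplus k c f - DD Rplus k (sig α c) f)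
            - (k α * (⟪c, α⟫ : ℂ) * ((2 * ⟪a, α⟫ / ⟪α, α⟫ : ℝ) : ℂ)) • (DD Rplus k b f - DD Rplus k (sig α b) f)) := by
      rw [map_sub, map_smul, map_smul, map_sub, map_sub, smul_sub, smul_sub]
      ring
    rw [step, hcc, hbb, smul_smul, smul_smul, ← sub_smul]
    rw [show (k α * (⟪b, α⟫ : ℂ) * ((2 * ⟪a, α⟫ / ⟪α, α⟫ : ℝ) : ℂ)) * ((2 * ⟪c, α⟫ / ⟪α, α⟫ : ℝ) : ℂ)
        - (k α * (⟪c, α⟫ : ℂ) * ((2 * ⟪a, α⟫ / ⟪α, α⟫ : ℝ) : ℂ)) * ((2 * ⟪b, α⟫ / ⟪α, α⟫ : ℝ) : ℂ) = 0 from by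
      push_cast; ring]
    rw [zero_smul, map_zero]
  linear_combination sums

theorem stmt_17 (n : ℕ) (R Rplus : Finset (V n))
    (hne : ∀ α ∈ R, α ≠ (0 : V n))
    (hrefl : ∀ α ∈ R, ∀ β ∈ R, β - (2 * ⟪β, α⟫ / ⟪α, α⟫) • α ∈ R)
    (hsub : Rplus ⊆ R)
    (hpos : ∀ α ∈ R, α ∈ Rplus ∨ -α ∈ Rplus)
    (hdisj : ∀ α ∈ Rplus, -α ∉ Rplus)
    (k : V n → ℂ)
    (hk : ∀ α ∈ R, ∀ β ∈ R, k (β - (2 * ⟪β, α⟫ / ⟪α, α⟫) • α) = k β)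
    (b c : V n) (Db Dc : Poly n → Poly n)
    (hDb : IsDunkl n Rplus k b Db) (hDc : IsDunkl n Rplus k c Dc) :
    ∀ f : Poly n, Db (Dc f) = Dc (Db f) := by
  have hα0 : ∀ α ∈ Rplus, α ≠ (0 : V n) := fun α h => hne α (hsub h)
  have hb : ∀ g : Poly n, Db g = DD Rplus k b g := by
    intro g
    obtain ⟨w, hw, hD⟩ := hDb g
    rw [hD, DD]
    congr 1
    refine Finset.sum_congr rfl fun α hα => ?_
    rw [q_eq (hα0 α hα) (hw α hα)]
  have hc : ∀ g : Poly n, Dc g = DD Rplus k c g := by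
    intro g
    obtain ⟨w, hw, hD⟩ := hDc g
    rw [hD, DD]
    congr 1
    refine Finset.sum_congr rfl fun α hα => ?_
    rw [q_eq (hα0 α hα) (hw α hα)]
  intro f
  rw [hc f, hb (DD Rplus k c f), hb f, hc (DD Rplus k b f)]
  induction f using MvPolynomial.induction_on with
  | C z => rw [DD_C hα0 k c, DD_zero hα0 k b, DD_C hα0 k b, DD_zero hα0 k c]
  | add f g hf hg => rw [DD_add hα0 k c, DD_add hα0 k b, hf, hg, DD_add hα0 k b, DD_add hα0 k c]
  | mul_X f i ih =>
    rw [show f * X i = xpoly n (EuclideanSpace.single i (1:ℝ)) * f from by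
      rw [xpoly_single]; ring]
    have h3 := comm_key R Rplus hne hrefl hsub hpos hdisj k hk b c (EuclideanSpace.single i (1:ℝ)) f
    rw [ih, sub_self, mul_zero] at h3
    exact sub_eq_zero.mp h3

end Stmt17
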